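/- Let (X, 𝔅, μ, T) be an ergodic measure-preserving dynamical system and A ∈ 𝔅 with μ(A) > 0, and suppose the return time to A has polynomial tails of summable exponent greater than 1: there exist C > 0 and β ∈ (0,1) with μ(A ∩ {r_A > t}) ≤ C·t^{−1/β} for all t ≥ 1. Let (E_n) be measurable sets with E_n ∩ A = ∅ for all n and with shadows E'_n = (E_n)'_A satisfying 0 < μ(E'_n) and μ(E'_n) → 0. Then μ(E'_n)·r_{E_n} → 0 in μ_{E'_n}-probability: for every ε > 0, μ_{E'_n}({x : r_{E_n}(x) ≥ ε/μ(E'_n)}) → 0 as n → ∞. -/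

import Mathlib

open MeasureTheory Filter Set ProbabilityTheory
open scoped ENNReal Topology ENat

noncomputable section

variable {X : Type*}

/-- The instant of the `i`-th visit (after time `0`) of the orbit of `x` under `T` to `B`,
with the convention that `hitInstant T B x 0 = 0` and the value is `⊤` if there is no
such visit. -/
def hitInstant (T : X → X) (B : Set X) (x : X) : ℕ → ℕ∞
  | 0 => 0
  | (i+1) => sInf {m : ℕ∞ | ∃ n : ℕ, hitInstant T B x i < (n : ℕ∞) ∧ T^[n] x ∈ B ∧ m = (n : ℕ∞)}

/-- The first hitting time `r_B(x) = inf {k ≥ 1 : T^k x ∈ B}` (with value `⊤` if the orbit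
never enters `B`). -/
def hitTime (T : X → X) (B : Set X) (x : X) : ℕ∞ := hitInstant T B x 1

/-- The `i`-th interarrival time (gap between the `i`-th and `(i+1)`-st visits);
`interGap T B 0 x` is the first hitting time `r_B^{(1)}(x)`, and once some
visit fails to occur, all subsequent gaps are `⊤`. -/
def interGap (T : X → X) (B : Set X) (i : ℕ) (x : X) : ℝ≥0∞ :=
  if hitInstant T B x i = ⊤ then ⊤
  else ((hitInstant T B x (i+1) - hitInstant T B x i : ℕ∞) : ℝ≥0∞)

/-- The shadow set `E'_A = ⋃_{k ≥ 0} (A ∩ {r_A > k} ∩ T^{-k} E)` of `E` in `A`. -/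
def shadow (T : X → X) (A E : Set X) : Set X :=
  ⋃ k : ℕ, A ∩ {x | (k : ℕ∞) < hitTime T A x} ∩ (T^[k]) ⁻¹' E

/-- The induced (first-return) map `T_A(x) = T^{r_A(x)}(x)` (junk value `x` if the orbit of
`x` never returns to `A`). -/
def inducedMap (T : X → X) (A : Set X) (x : X) : X :=
  T^[sInf {n : ℕ | 1 ≤ n ∧ T^[n] x ∈ A}] x

/-- The rescaled interarrival process `c · Φ_B : x ↦ (c · r_B^{(i)}(x))_{i ≥ 1}`,
as a random element of `ℕ → ℝ≥0∞`. -/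
def rescaledProcess (T : X → X) (B : Set X) (c : ℝ≥0∞) (x : X) : ℕ → ℝ≥0∞ :=
  fun i => c * interGap T B i x

/-- Convergence in distribution: the laws of the random elements `f n : X → (ℕ → ℝ≥0∞)`
under the measures `P n` converge weakly to `ν` (tested against bounded continuous
real functions, with `ℕ → ℝ≥0∞` carrying the product topology). -/
def ConvInDist [MeasurableSpace X] (P : ℕ → Measure X)
    (f : ℕ → X → (ℕ → ℝ≥0∞)) (ν : Measure (ℕ → ℝ≥0∞)) : Prop :=
  ∀ g : BoundedContinuousFunction (ℕ → ℝ≥0∞) ℝ,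
    Tendsto (fun n => ∫ x, g (f n x) ∂(P n)) atTop (𝓝 (∫ y, g y ∂ν))

end

section Aux

variable {X : Type*}

lemma hitTime_le_of {T : X → X} {B : Set X} {x : X} {k : ℕ} (hk : 0 < k)
    (h : T^[k] x ∈ B) : hitTime T B x ≤ (k : ℕ∞) := by
  have : hitTime T B x =
      sInf {m : ℕ∞ | ∃ n : ℕ, hitInstant T B x 0 < (n : ℕ∞) ∧ T^[n] x ∈ B ∧ m = (n : ℕ∞)} := by
    rfl
  rw [this]
  refine sInf_le ⟨k, ?_, h, rfl⟩
  show (0 : ℕ∞) < (k : ℕ∞)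
  exact_mod_cast hk

lemma lt_hitTime_iff {T : X → X} {B : Set X} {x : X} {k : ℕ} :
    (k : ℕ∞) < hitTime T B x ↔ ∀ j : ℕ, 1 ≤ j → j ≤ k → T^[j] x ∉ B := by
  constructor
  · intro h j h1 h2 hB
    have hle : hitTime T B x ≤ (j : ℕ∞) := hitTime_le_of h1 hB
    have : (j : ℕ∞) ≤ (k : ℕ∞) := by exact_mod_cast h2
    exact absurd (hle.trans this) (not_le.mpr h)
  · intro h
    have hk1 : (k : ℕ∞) < ((k + 1 : ℕ) : ℕ∞) := by exact_mod_cast Nat.lt_succ_self k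
    refine lt_of_lt_of_le hk1 ?_
    have : hitTime T B x =
        sInf {m : ℕ∞ | ∃ n : ℕ, hitInstant T B x 0 < (n : ℕ∞) ∧ T^[n] x ∈ B ∧ m = (n : ℕ∞)} := by
      rfl
    rw [this]
    refine le_sInf ?_
    rintro m ⟨n, hn0, hnB, rfl⟩
    have hn0' : 0 < n := by
      have : (0 : ℕ∞) < (n : ℕ∞) := hn0
      exact_mod_cast this
    have : ¬ n ≤ k := fun hnk => h n hn0' hnk hnB
    exact_mod_cast Nat.succ_le_of_lt (not_le.mp this)

lemma measurableSet_lt_hitTime [MeasurableSpace X] {T : X → X} (hT : Measurable T)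
    {B : Set X} (hB : MeasurableSet B) (k : ℕ) :
    MeasurableSet {x | (k : ℕ∞) < hitTime T B x} := by
  have : {x | (k : ℕ∞) < hitTime T B x} = ⋂ j ∈ Finset.Icc 1 k, (T^[j]) ⁻¹' Bᶜ := by
    ext x
    simp only [mem_setOf_eq, lt_hitTime_iff, mem_iInter, Finset.mem_Icc, mem_preimage,
      mem_compl_iff]
    exact ⟨fun h j hj => h j hj.1 hj.2, fun h j h1 h2 => h j ⟨h1, h2⟩⟩
  rw [this]
  exact MeasurableSet.biInter (Finset.Icc 1 k).countable_toSet
    fun j _ => (hT.iterate j) hB.compl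

lemma measurableSet_shadow [MeasurableSpace X] {T : X → X} (hT : Measurable T)
    {A B : Set X} (hA : MeasurableSet A) (hB : MeasurableSet B) :
    MeasurableSet (shadow T A B) :=
  MeasurableSet.iUnion fun k =>
    ((hA.inter (measurableSet_lt_hitTime hT hA k)).inter ((hT.iterate k) hB))

end Aux

/-- If the return time to `A` has polynomial tails
(`μ(A ∩ {r_A > t}) ≤ C t^{-1/β}` with `β ∈ (0,1)`) and `(E_n)` are sets disjoint from `A`
whose shadows `E'_n` have positive measure tending to `0`, then `μ(E'_n)·r_{E_n} → 0` in
`μ_{E'_n}`-probability. -/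
theorem statement9 {X : Type*} [MetricSpace X] [MeasurableSpace X] [BorelSpace X]
    (T : X → X) (μ : Measure X) [IsProbabilityMeasure μ] (hErg : Ergodic T μ)
    (A : Set X) (hA : MeasurableSet A) (hApos : 0 < μ A)
    (C : ℝ) (hC : 0 < C) (β : ℝ) (hβ0 : 0 < β) (hβ1 : β < 1)
    (htail : ∀ t : ℕ, 1 ≤ t →
      μ (A ∩ {x | (t : ℕ∞) < hitTime T A x}) ≤ ENNReal.ofReal (C * (t : ℝ) ^ (-(1 / β))))
    (E : ℕ → Set X) (hE : ∀ n, MeasurableSet (E n)) (hEA : ∀ n, Disjoint (E n) A)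
    (hpos : ∀ n, 0 < μ (shadow T A (E n)))
    (h0 : Tendsto (fun n => μ (shadow T A (E n))) atTop (𝓝 0)) :
    ∀ ε : ℝ, 0 < ε →
      Tendsto (fun n => μ[|shadow T A (E n)]
        {x | ENNReal.ofReal ε / μ (shadow T A (E n)) ≤ (hitTime T (E n) x : ℝ≥0∞)})
        atTop (𝓝 0) := by
  intro ε hε
  have hT : Measurable T := hErg.toMeasurePreserving.measurable
  set f : ℕ → ℝ≥0∞ := fun n => μ (shadow T A (E n)) with hf
  have hfne : ∀ n, f n ≠ 0 := fun n => (hpos n).ne'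
  have hftop : ∀ n, f n ≠ ⊤ := fun n => (measure_lt_top μ _).ne
  set a : ℕ → ℝ := fun n => (f n).toReal with ha
  have hapos : ∀ n, 0 < a n := fun n => ENNReal.toReal_pos (hfne n) (hftop n)
  have ha0 : Tendsto a atTop (𝓝 0) := by
    have := (ENNReal.tendsto_toReal (a := 0) (by simp)).comp h0
    simp only [ENNReal.toReal_zero] at this
    exact this
  set m : ℕ → ℝ := fun n => ε / a n with hm
  have hmTop : Tendsto m atTop atTop := by
    have h1 : Tendsto a atTop (𝓝[>] 0) :=
      tendsto_nhdsWithin_of_tendsto_nhds_of_eventually_within _ ha0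
        (Eventually.of_forall fun n => hapos n)
    have h2 : Tendsto (fun n => (a n)⁻¹) atTop atTop := h1.inv_tendsto_nhdsGT_zero
    have h3 := h2.const_mul_atTop hε
    simpa [hm, div_eq_mul_inv] using h3
  set t : ℕ → ℕ := fun n => ⌊m n⌋₊ with ht
  have htTop : Tendsto t atTop atTop := tendsto_nat_floor_atTop.comp hmTop
  -- the ENNReal threshold and its real version
  have hMtoReal : ∀ n, (ENNReal.ofReal ε / f n).toReal = m n := by
    intro n
    rw [ENNReal.toReal_div, ENNReal.toReal_ofReal hε.le]
  -- key inclusion and bound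
  set g : ℕ → ℝ≥0∞ := fun n =>
    (f n)⁻¹ * ENNReal.ofReal (C * (t n : ℝ) ^ (-(1 / β))) with hg
  have hbound : ∀ n, 1 ≤ t n →
      μ[|shadow T A (E n)]
        {x | ENNReal.ofReal ε / μ (shadow T A (E n)) ≤ (hitTime T (E n) x : ℝ≥0∞)} ≤ g n := by
    intro n h1t
    have hs : MeasurableSet (shadow T A (E n)) := measurableSet_shadow hT hA (hE n)
    rw [ProbabilityTheory.cond_apply hs μ]
    have hsub : shadow T A (E n) ∩
        {x | ENNReal.ofReal ε / μ (shadow T A (E n)) ≤ (hitTime T (E n) x : ℝ≥0∞)} ⊆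
        A ∩ {x | (t n : ℕ∞) < hitTime T A x} := by
      rintro x ⟨hxs, hxS⟩
      obtain ⟨k, hk⟩ := mem_iUnion.mp hxs
      obtain ⟨⟨hxA, hklt⟩, hkE⟩ := hk
      have hk0 : 0 < k := by
        rcases Nat.eq_zero_or_pos k with h | h
        · subst h
          exact absurd hxA (Set.disjoint_left.mp (hEA n) (by simpa using hkE))
        · exact h
      have hle : hitTime T (E n) x ≤ (k : ℕ∞) := hitTime_le_of hk0 hkE
      have hMk : ENNReal.ofReal ε / f n ≤ ((k : ℕ∞) : ℝ≥0∞) := by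
        refine le_trans hxS ?_
        exact_mod_cast ENat.toENNReal_le.mpr hle
      have hMk' : m n ≤ (k : ℝ) := by
        have := ENNReal.toReal_mono (by simp) hMk
        rwa [hMtoReal n, ENat.toENNReal_coe, ENNReal.toReal_natCast] at this
      have htk : t n ≤ k := by
        have := Nat.floor_mono hMk'
        simpa [ht] using this
      refine ⟨hxA, ?_⟩
      show ((t n : ℕ) : ℕ∞) < hitTime T A x
      exact lt_of_le_of_lt (by exact_mod_cast htk) hklt
    calc (μ (shadow T A (E n)))⁻¹ * μ (shadow T A (E n) ∩ _)
        ≤ (f n)⁻¹ * μ (A ∩ {x | (t n : ℕ∞) < hitTime T A x}) :=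
          mul_le_mul_of_nonneg_left (measure_mono hsub) zero_le
      _ ≤ g n := mul_le_mul_of_nonneg_left (htail (t n) h1t) zero_le
  -- the bound tends to zero
  have hgto : Tendsto g atTop (𝓝 0) := by
    set δ : ℝ := 1 / β - 1 with hδ
    have hδpos : 0 < δ := by
      rw [hδ]
      linarith [one_lt_one_div hβ0 hβ1]
    set K : ℝ := C * (2 / ε) ^ (1 / β) with hK
    set r : ℕ → ℝ := fun n => (a n)⁻¹ * (C * (t n : ℝ) ^ (-(1 / β))) with hr
    have hgr : ∀ n, g n = ENNReal.ofReal (r n) := by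
      intro n
      have h1 : (f n)⁻¹ = ENNReal.ofReal (a n)⁻¹ := by
        rw [ENNReal.ofReal_inv_of_pos (hapos n), ENNReal.ofReal_toReal (hftop n)]
      rw [show g n = (f n)⁻¹ * ENNReal.ofReal (C * (t n : ℝ) ^ (-(1 / β))) from rfl, h1,
        ← ENNReal.ofReal_mul (by positivity)]
    have hrto : Tendsto r atTop (𝓝 0) := by
      have hev : ∀ᶠ n in atTop, r n ≤ K * a n ^ δ := by
        filter_upwards [hmTop.eventually_ge_atTop 2] with n hm2
        have hmpos : 0 < m n := lt_of_lt_of_le (by norm_num) hm2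
        have htge : m n / 2 ≤ (t n : ℝ) := by
          have h1 : m n - 1 ≤ (t n : ℝ) := (Nat.sub_one_lt_floor (m n)).le
          linarith
        have htpos : (0 : ℝ) < m n / 2 := by linarith
        have hpow : (t n : ℝ) ^ (-(1 / β)) ≤ (m n / 2) ^ (-(1 / β)) :=
          Real.rpow_le_rpow_of_nonpos htpos htge (neg_nonpos.mpr (by positivity))
        have hmeq : m n / 2 = ε / (2 * a n) := by
          show ε / a n / 2 = ε / (2 * a n)
          rw [div_div, mul_comm]
        have hinv : (m n / 2) ^ (-(1 / β)) = (2 / ε) ^ (1 / β) * a n ^ (1 / β) := by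
          rw [hmeq, Real.rpow_neg (by positivity), ← Real.inv_rpow (by positivity)]
          rw [show (ε / (2 * a n))⁻¹ = 2 / ε * a n by rw [inv_div]; ring]
          exact Real.mul_rpow (by positivity) (hapos n).le
        calc r n ≤ (a n)⁻¹ * (C * ((2 / ε) ^ (1 / β) * a n ^ (1 / β))) := by
              refine mul_le_mul_of_nonneg_left ?_ (by positivity)
              refine mul_le_mul_of_nonneg_left ?_ hC.le
              rw [← hinv]; exact hpow
          _ = K * a n ^ δ := by
              rw [hK, hδ, Real.rpow_sub (hapos n), Real.rpow_one]
              field_simp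
      have hK0 : Tendsto (fun n => K * a n ^ δ) atTop (𝓝 0) := by
        have h1 : Tendsto (fun n => a n ^ δ) atTop (𝓝 ((0 : ℝ) ^ δ)) :=
          ha0.rpow_const (Or.inr hδpos.le)
        rw [Real.zero_rpow hδpos.ne'] at h1
        simpa using h1.const_mul K
      exact squeeze_zero' (Eventually.of_forall fun n => by positivity) hev hK0
    have : Tendsto (fun n => ENNReal.ofReal (r n)) atTop (𝓝 (ENNReal.ofReal 0)) :=
      (ENNReal.continuous_ofReal.tendsto 0).comp hrto
    simpa [hgr, funext hgr] using this
  refine tendsto_of_tendsto_of_tendsto_of_le_of_le' tendsto_const_nhds hgto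
    (Eventually.of_forall fun n => zero_le) ?_
  filter_upwards [htTop.eventually_ge_atTop 1] with n h1t
  exact hbound n h1t
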